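/- Let a, b, c be real with abc ≠ 0, ac > 0, b² − 4ac > 0, (a_n) satisfy c·a_{n+2} + b·a_{n+1} + a·a_n = 0 with a_0·b·(a_1 c + b a_0) > 0 and |a_0 c| > |(a_1 c + b a_0)·α|, where α is the largest-modulus root of a t² + b t + c. Then for all sufficiently large m, every zero z of P_m(z) = ∑_{n=0}^m a_n z^n satisfies |z| ≤ |c|/(|a|·|α|). -/

import Mathlib

lemma abel_sum_aux (e : ℕ → ℝ) (w : ℂ) : ∀ m : ℕ,
    (w - 1) * ∑ n ∈ Finset.range (m + 1), (e n : ℂ) * w ^ n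
      = (e m : ℂ) * w ^ (m + 1) - (e 0 : ℂ)
        - ∑ n ∈ Finset.range m, ((e (n + 1) : ℂ) - (e n : ℂ)) * w ^ (n + 1) := by
  intro m
  induction m with
  | zero => simp; ring
  | succ k ih =>
      rw [Finset.sum_range_succ (f := fun n => (e n : ℂ) * w ^ n),
        Finset.sum_range_succ (f := fun n => ((e (n + 1) : ℂ) - (e n : ℂ)) * w ^ (n + 1))]
      linear_combination ih

lemma EK_bound (e : ℕ → ℝ) (m : ℕ) (hpos : ∀ n, 0 < e n) (hmono : ∀ n, e n ≤ e (n + 1))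
    (w : ℂ) (hw : ∑ n ∈ Finset.range (m + 1), (e n : ℂ) * w ^ n = 0) :
    ‖w‖ ≤ 1 := by
  by_contra hgt
  push_neg at hgt
  have h := abel_sum_aux e w m
  rw [hw, mul_zero] at h
  have key : (e m : ℂ) * w ^ (m + 1)
      = (e 0 : ℂ) + ∑ n ∈ Finset.range m, ((e (n + 1) : ℂ) - (e n : ℂ)) * w ^ (n + 1) := by
    linear_combination -h
  set A := ‖w‖ with hA
  have h1 : ‖(e m : ℂ) * w ^ (m + 1)‖ = e m * A ^ (m + 1) := by
    rw [norm_mul, norm_pow, Complex.norm_real, Real.norm_eq_abs, abs_of_pos (hpos m)]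
  have h2 : ‖(e 0 : ℂ) + ∑ n ∈ Finset.range m, ((e (n + 1) : ℂ) - (e n : ℂ)) * w ^ (n + 1)‖
      ≤ e 0 + ∑ n ∈ Finset.range m, (e (n + 1) - e n) * A ^ (n + 1) := by
    refine le_trans (norm_add_le _ _) (add_le_add ?_ ?_)
    · rw [Complex.norm_real, Real.norm_eq_abs, abs_of_pos (hpos 0)]
    · refine le_trans (norm_sum_le _ _) (Finset.sum_le_sum fun n _ => ?_)
      rw [show ((e (n + 1) : ℂ) - (e n : ℂ)) = ((e (n + 1) - e n : ℝ) : ℂ) by push_cast; ring,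
        norm_mul, norm_pow, Complex.norm_real, Real.norm_eq_abs, abs_of_nonneg (sub_nonneg.mpr (hmono n))]
  have hAm : (1 : ℝ) ≤ A ^ m := one_le_pow₀ hgt.le
  have h3 : e 0 + ∑ n ∈ Finset.range m, (e (n + 1) - e n) * A ^ (n + 1) ≤ e m * A ^ m := by
    have t1 : e 0 ≤ e 0 * A ^ m := le_mul_of_one_le_right (hpos 0).le hAm
    have t2 : ∑ n ∈ Finset.range m, (e (n + 1) - e n) * A ^ (n + 1)
        ≤ ∑ n ∈ Finset.range m, (e (n + 1) - e n) * A ^ m := by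
      refine Finset.sum_le_sum fun n hn => ?_
      exact mul_le_mul_of_nonneg_left
        (pow_le_pow_right₀ hgt.le (Finset.mem_range.mp hn))
        (sub_nonneg.mpr (hmono n))
    have t3 : ∑ n ∈ Finset.range m, (e (n + 1) - e n) * A ^ m = (e m - e 0) * A ^ m := by
      rw [← Finset.sum_mul, Finset.sum_range_sub (f := e)]
    have t4 : e 0 * A ^ m + (e m - e 0) * A ^ m = e m * A ^ m := by ring
    linarith
  have h5 : e m * A ^ (m + 1) ≤ e m * A ^ m := by
    calc e m * A ^ (m + 1) = ‖(e m : ℂ) * w ^ (m + 1)‖ := h1.symm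
      _ ≤ e 0 + ∑ n ∈ Finset.range m, (e (n + 1) - e n) * A ^ (n + 1) := by rw [key]; exact h2
      _ ≤ e m * A ^ m := h3
  have h6 : A ^ m < A ^ (m + 1) := pow_lt_pow_right₀ hgt (Nat.lt_succ_self m)
  nlinarith [mul_pos (hpos m) (sub_pos.mpr h6)]

theorem zeros_inside_ball_CD_neg
    (a b c : ℝ) (habc : a * b * c ≠ 0) (hac : 0 < a * c) (hdisc : b ^ 2 - 4 * a * c > 0)
    (α : ℝ) (hα : a * α ^ 2 + b * α + c = 0)
    (hαmax : ∀ β : ℝ, a * β ^ 2 + b * β + c = 0 → |β| ≤ |α|)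
    (aseq : ℕ → ℝ)
    (hrec : ∀ n : ℕ, c * aseq (n + 2) + b * aseq (n + 1) + a * aseq n = 0)
    (hsign : aseq 0 * b * (aseq 1 * c + b * aseq 0) > 0)
    (hmod : |aseq 0 * c| > |(aseq 1 * c + b * aseq 0) * α|) :
    ∃ M : ℕ, ∀ m ≥ M, ∀ z : ℂ,
      (∑ n ∈ Finset.range (m + 1), (aseq n : ℂ) * z ^ n) = 0 →
      ‖z‖ ≤ |c| / (|a| * |α|) := by
  obtain ⟨ha, hb, hc⟩ : a ≠ 0 ∧ b ≠ 0 ∧ c ≠ 0 := by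
    refine ⟨?_, ?_, ?_⟩ <;> intro h <;> rw [h] at habc <;> simp at habc
  have hα0 : α ≠ 0 := by
    intro h
    rw [h] at hα
    apply hc
    linarith [hα]
  set β : ℝ := c / (a * α) with hβdef
  have hab : a * α * β = c := by rw [hβdef]; field_simp
  have hαβpos : 0 < α * β := by
    have h1 : α * β = (a * c) / a ^ 2 := by rw [hβdef]; field_simp
    rw [h1]
    exact div_pos hac (by positivity)
  have hβ0 : β ≠ 0 := by
    intro h
    rw [h, mul_zero] at hαβpos
    exact lt_irrefl 0 hαβpos
  have ha0 : aseq 0 ≠ 0 := by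
    intro h
    rw [h] at hsign
    simp at hsign
  set δ0 : ℝ := β * aseq 1 - aseq 0 with hδ0def
  have hsum : a * α + a * β + b = 0 := by
    have h2 : α * (a * α + a * β + b) = 0 := by linear_combination hα + hab
    rcases mul_eq_zero.mp h2 with h | h
    · exact absurd h hα0
    · exact h
  have key : ∀ n, α * (β * aseq (n + 2) - aseq (n + 1)) = β * aseq (n + 1) - aseq n := by
    intro n
    refine mul_left_cancel₀ ha ?_
    linear_combination aseq (n + 2) * hab + hrec n - aseq (n + 1) * hsum
  have hδ : ∀ n, β * aseq (n + 1) - aseq n = δ0 * α⁻¹ ^ n := by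
    intro n
    induction n with
    | zero => simp [hδ0def]
    | succ k ih =>
        have h9 : β * aseq (k + 2) - aseq (k + 1)
            = α⁻¹ * (α * (β * aseq (k + 2) - aseq (k + 1))) := (inv_mul_cancel_left₀ hα0 _).symm
        rw [h9, key k, ih, pow_succ]
        ring
  -- sign information
  have hXY : 0 < (α * β * aseq 0) * (α ^ 2 * δ0) := by
    have hid : (aseq 1 * c + b * aseq 0) * α = a * (α ^ 2 * δ0 - α * β * aseq 0) := by
      linear_combination (-(a * α ^ 2)) * hδ0def + (aseq 0 - α * aseq 1) * hab + aseq 0 * hα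
    have hid2 : aseq 0 * c = a * (α * β * aseq 0) := by linear_combination (-(aseq 0)) * hab
    rw [hid, hid2, abs_mul a (α * β * aseq 0), abs_mul a (α ^ 2 * δ0 - α * β * aseq 0)] at hmod
    have h3 : |α ^ 2 * δ0 - α * β * aseq 0| < |α * β * aseq 0| :=
      lt_of_mul_lt_mul_left hmod (abs_nonneg a)
    have h5 : (α ^ 2 * δ0 - α * β * aseq 0) ^ 2 < (α * β * aseq 0) ^ 2 := by
      rw [← sq_abs, ← sq_abs (α * β * aseq 0)]
      exact pow_lt_pow_left₀ h3 (abs_nonneg _) two_ne_zero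
    nlinarith [sq_nonneg (α ^ 2 * δ0), h5]
  have ha0δ0 : 0 < aseq 0 * δ0 := by
    by_contra hcon
    push_neg at hcon
    have h6 : (α * β) * (aseq 0 * δ0) ≤ 0 := mul_nonpos_of_nonneg_of_nonpos hαβpos.le hcon
    have h7 : α ^ 2 * ((α * β) * (aseq 0 * δ0)) ≤ 0 :=
      mul_nonpos_of_nonneg_of_nonpos (sq_nonneg α) h6
    nlinarith [hXY, h7]
  have hu : 0 < β * α⁻¹ := by
    have h8 : β * α⁻¹ = (α * β) * (α⁻¹ * α⁻¹) := by field_simp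
    rw [h8]
    exact mul_pos hαβpos (mul_self_pos.mpr (inv_ne_zero hα0))
  set e : ℕ → ℝ := fun n => aseq 0 * (aseq n * β ^ n) with he
  have hstep : ∀ n, e (n + 1) = e n + (aseq 0 * δ0) * (β * α⁻¹) ^ n := by
    intro n
    simp only [he, pow_succ, mul_pow]
    linear_combination (aseq 0 * β ^ n) * hδ n
  have hpos : ∀ n, 0 < e n := by
    intro n
    induction n with
    | zero =>
        have := mul_self_pos.mpr ha0
        simpa [he] using this
    | succ k ih =>
        rw [hstep k]
        have := mul_pos ha0δ0 (pow_pos hu k)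
        linarith
  have hmono : ∀ n, e n ≤ e (n + 1) := by
    intro n
    rw [hstep n]
    have := mul_pos ha0δ0 (pow_pos hu n)
    linarith
  refine ⟨0, fun m _ z hz => ?_⟩
  set w : ℂ := z / (β : ℂ) with hwdef
  have hβℂ : (β : ℂ) ≠ 0 := by exact_mod_cast hβ0
  have hsum0 : ∑ n ∈ Finset.range (m + 1), (e n : ℂ) * w ^ n = 0 := by
    have hterm : ∀ n ∈ Finset.range (m + 1),
        (e n : ℂ) * w ^ n = (aseq 0 : ℂ) * ((aseq n : ℂ) * z ^ n) := by
      intro n _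
      simp only [he, hwdef]
      push_cast
      rw [div_pow]
      field_simp
    rw [Finset.sum_congr rfl hterm, ← Finset.mul_sum, hz, mul_zero]
  have hw1 : ‖w‖ ≤ 1 := EK_bound e m hpos hmono w hsum0
  have hzw : ‖z‖ = ‖w‖ * |β| := by
    rw [show z = w * (β : ℂ) by rw [hwdef]; field_simp]
    rw [norm_mul, Complex.norm_real, Real.norm_eq_abs]
  have hβabs : |β| = |c| / (|a| * |α|) := by
    rw [hβdef, abs_div, abs_mul]
  rw [hzw, ← hβabs]
  calc ‖w‖ * |β| ≤ 1 * |β| :=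
        mul_le_mul_of_nonneg_right hw1 (abs_nonneg β)
    _ = |β| := one_mul _
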